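/- Let J = (a,b) with a < 0 < b, let g : ℝ → ℝ be C¹ on J with g(0) = 0, g'(0) > 0 and x·g(x) > 0 for all x ∈ J \ {0}, and let G(x) = ∫₀ˣ g(s) ds. If d/dx (g(x)/x) > 0 for all x ∈ (a,0) and d/dx (g(x)/x) < 0 for all x ∈ (0,b), then the period function is strictly increasing: for all r, r' ∈ (0,b) with r < r' and all s, s' ∈ (a,0) with G(s) = G(r) and G(s') = G(r'), one has √2 ∫ₛʳ dx/√(G(r) − G(x)) < √2 ∫_{s'}^{r'} dx/√(G(r') − G(x)). -/

import Mathlib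

open Set Real MeasureTheory intervalIntegral

section
variable {a b : ℝ} {g G : ℝ → ℝ}

lemma G_hasDerivAt (ha : a < 0) (hb : 0 < b)
    (hgc : ContinuousOn g (Ioo a b)) (hG : ∀ x, G x = ∫ s in (0:ℝ)..x, g s)
    {x : ℝ} (hx : x ∈ Ioo a b) : HasDerivAt G (g x) x := by
  have hGfun : G = fun u => ∫ s in (0:ℝ)..u, g s := funext hG
  subst hGfun
  have h0 : (0:ℝ) ∈ Ioo a b := ⟨ha, hb⟩
  have hsub : uIcc (0:ℝ) x ⊆ Ioo a b := (ordConnected_Ioo).uIcc_subset h0 hx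
  exact intervalIntegral.integral_hasDerivAt_right
    ((hgc.mono hsub).intervalIntegrable)
    (ContinuousOn.stronglyMeasurableAtFilter isOpen_Ioo hgc x hx)
    (hgc.continuousAt (isOpen_Ioo.mem_nhds hx))

lemma G_contOn (ha : a < 0) (hb : 0 < b)
    (hgc : ContinuousOn g (Ioo a b)) (hG : ∀ x, G x = ∫ s in (0:ℝ)..x, g s) :
    ContinuousOn G (Ioo a b) := fun x hx =>
  ((G_hasDerivAt ha hb hgc hG hx).continuousAt).continuousWithinAt

lemma G_strictMonoOn (ha : a < 0) (hb : 0 < b)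
    (hgc : ContinuousOn g (Ioo a b)) (hG : ∀ x, G x = ∫ s in (0:ℝ)..x, g s)
    (hgpos : ∀ x ∈ Ioo (0:ℝ) b, 0 < g x) :
    StrictMonoOn G (Ico 0 b) := by
  apply strictMonoOn_of_deriv_pos (convex_Ico 0 b)
  · exact (G_contOn ha hb hgc hG).mono (fun x hx => ⟨lt_of_lt_of_le ha hx.1, hx.2⟩)
  · intro x hx
    rw [interior_Ico] at hx
    rw [(G_hasDerivAt ha hb hgc hG ⟨lt_trans ha hx.1, hx.2⟩).deriv]
    exact hgpos x hx

lemma G_intervalIntegrable (ha : a < 0) (hb : 0 < b)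
    (hgc : ContinuousOn g (Ioo a b)) {x y : ℝ} (hx : x ∈ Ioo a b) (hy : y ∈ Ioo a b) :
    IntervalIntegrable g volume x y :=
  (hgc.mono ((ordConnected_Ioo).uIcc_subset hx hy)).intervalIntegrable

lemma G_sub_eq (ha : a < 0) (hb : 0 < b)
    (hgc : ContinuousOn g (Ioo a b)) (hG : ∀ x, G x = ∫ s in (0:ℝ)..x, g s)
    {x y : ℝ} (hx : x ∈ Ioo a b) (hy : y ∈ Ioo a b) :
    G y - G x = ∫ s in x..y, g s := by
  rw [hG x, hG y]
  exact intervalIntegral.integral_interval_sub_left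
    (G_intervalIntegrable ha hb hgc ⟨ha, hb⟩ hy) (G_intervalIntegrable ha hb hgc ⟨ha, hb⟩ hx)

lemma integrable_pos (ha : a < 0) (hb : 0 < b)
    (hgc : ContinuousOn g (Ioo a b)) (hG : ∀ x, G x = ∫ s in (0:ℝ)..x, g s)
    (hgpos : ∀ x ∈ Ioo (0:ℝ) b, 0 < g x)
    {r : ℝ} (hr : r ∈ Ioo (0:ℝ) b) :
    IntervalIntegrable (fun x => 1 / Real.sqrt (G r - G x)) volume 0 r := by
  have hr0 : 0 < r := hr.1
  have hIcoSub : Ico (0:ℝ) r ⊆ Ioo a b := fun x hx =>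
    ⟨lt_of_lt_of_le ha hx.1, lt_trans hx.2 hr.2⟩
  have hGmono := G_strictMonoOn ha hb hgc hG hgpos
  have hDpos : ∀ x ∈ Ico (0:ℝ) r, 0 < G r - G x := by
    intro x hx
    have := hGmono ⟨hx.1, lt_trans hx.2 hr.2⟩ ⟨le_of_lt hr0, hr.2⟩ hx.2
    linarith
  have hcont : ContinuousOn (fun x => 1 / Real.sqrt (G r - G x)) (Ico 0 r) := by
    apply ContinuousOn.div continuousOn_const
    · exact Real.continuous_sqrt.comp_continuousOn
        (continuousOn_const.sub ((G_contOn ha hb hgc hG).mono hIcoSub))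
    · exact fun x hx => ne_of_gt (Real.sqrt_pos.mpr (hDpos x hx))
  -- part 1 : [0, r/2]
  have part1 : IntervalIntegrable (fun x => 1 / Real.sqrt (G r - G x)) volume 0 (r/2) := by
    apply ContinuousOn.intervalIntegrable
    apply hcont.mono
    rw [uIcc_of_le (by linarith)]
    exact fun x hx => ⟨hx.1, lt_of_le_of_lt hx.2 (by linarith)⟩
  -- minimum of g on [r/2, r]
  obtain ⟨c, hc, hcmin⟩ := isCompact_Icc.exists_isMinOn
    (Set.nonempty_Icc.mpr (by linarith : r/2 ≤ r))
    (hgc.mono (fun x hx => ⟨lt_of_lt_of_le ha (by linarith [hx.1]), lt_of_le_of_lt hx.2 hr.2⟩))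
  have hm : 0 < g c := hgpos c ⟨by linarith [hc.1], lt_of_le_of_lt hc.2 hr.2⟩
  -- lower bound G r - G x ≥ g c * (r - x) on [r/2, r]
  have hlow : ∀ x ∈ Icc (r/2) r, g c * (r - x) ≤ G r - G x := by
    intro x hx
    have hxab : x ∈ Ioo a b := ⟨lt_of_lt_of_le ha (by linarith [hx.1]), lt_of_le_of_lt hx.2 hr.2⟩
    rw [G_sub_eq ha hb hgc hG hxab ⟨lt_trans ha hr0, hr.2⟩]
    calc g c * (r - x) = ∫ _ in x..r, g c := by rw [intervalIntegral.integral_const]; ring_nf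
      _ ≤ ∫ s in x..r, g s := by
          apply intervalIntegral.integral_mono_on hx.2 intervalIntegrable_const
            (G_intervalIntegrable ha hb hgc hxab ⟨lt_trans ha hr0, hr.2⟩)
          intro y hy
          exact hcmin ⟨le_trans hx.1 hy.1, hy.2⟩
  -- the dominating function
  have hbound : IntervalIntegrable (fun x => (1 / Real.sqrt (g c)) * (r - x) ^ (-(1/2) : ℝ))
      volume (r/2) r := by
    have h1 : IntervalIntegrable (fun x : ℝ => x ^ (-(1/2) : ℝ)) volume 0 (r/2) :=
      intervalIntegrable_rpow' (by norm_num)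
    have h2 := (h1.comp_sub_left r).symm
    simp only [sub_zero] at h2
    rw [show r - r/2 = r/2 by ring] at h2
    exact h2.const_mul _
  have part2 : IntervalIntegrable (fun x => 1 / Real.sqrt (G r - G x)) volume (r/2) r := by
    apply hbound.mono_fun
    · have hres : volume.restrict (Set.uIoc (r/2) r) = volume.restrict (Ioo (r/2) r) := by
        rw [uIoc_of_le (by linarith : r/2 ≤ r)]
        exact (Measure.restrict_congr_set Ioo_ae_eq_Ioc).symm
      rw [hres]
      exact (hcont.mono (fun x hx => ⟨by linarith [hx.1], hx.2⟩)).aestronglyMeasurable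
        measurableSet_Ioo
    · rw [uIoc_of_le (by linarith : r/2 ≤ r)]
      refine (ae_restrict_iff' measurableSet_Ioc).mpr (Filter.Eventually.of_forall ?_)
      intro x hx
      simp only [norm_eq_abs]
      rcases eq_or_lt_of_le hx.2 with heq | hlt
      · rw [heq]
        simp [sub_self, Real.zero_rpow (by norm_num : (-(1/2):ℝ) ≠ 0)]
      · have hxr : 0 < r - x := by linarith
        have hDlow := hlow x ⟨hx.1.le, hx.2⟩
        have hDpos' : 0 < G r - G x := lt_of_lt_of_le (by positivity) hDlow
        have hrpow : (r - x) ^ (-(1/2) : ℝ) = (Real.sqrt (r - x))⁻¹ := by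
          rw [Real.rpow_neg hxr.le, Real.sqrt_eq_rpow]
        rw [hrpow]
        rw [abs_of_nonneg (by positivity), abs_of_nonneg (by positivity)]
        have hEq : 1 / Real.sqrt (g c) * (Real.sqrt (r - x))⁻¹
            = 1 / Real.sqrt (g c * (r - x)) := by
          rw [Real.sqrt_mul hm.le]
          field_simp
        rw [hEq]
        apply one_div_le_one_div_of_le (Real.sqrt_pos.mpr (by positivity))
        exact Real.sqrt_le_sqrt hDlow
  exact part1.trans part2

lemma psi_strictAntiOn (ha : a < 0) (hb : 0 < b)
    (hgc : ContinuousOn g (Ioo a b))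
    (hgd : ∀ x ∈ Ioo (0:ℝ) b, DifferentiableAt ℝ g x)
    (hG : ∀ x, G x = ∫ s in (0:ℝ)..x, g s)
    (hpos : ∀ x ∈ Ioo (0:ℝ) b, deriv (fun y => g y / y) x < 0) :
    StrictAntiOn (fun x => x * g x - 2 * G x) (Ico 0 b) := by
  have hsub : Ico (0:ℝ) b ⊆ Ioo a b := fun x hx => ⟨lt_of_lt_of_le ha hx.1, hx.2⟩
  apply strictAntiOn_of_deriv_neg (convex_Ico 0 b)
  · refine ContinuousOn.sub (ContinuousOn.mul continuousOn_id (hgc.mono hsub)) ?_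
    exact continuousOn_const.mul ((fun x hx =>
      ((G_hasDerivAt ha hb hgc hG (hsub hx)).continuousAt).continuousWithinAt))
  · intro x hx
    rw [interior_Ico] at hx
    have hxab : x ∈ Ioo a b := ⟨lt_trans ha hx.1, hx.2⟩
    have hder : HasDerivAt (fun x => x * g x - 2 * G x)
        (1 * g x + x * deriv g x - 2 * g x) x := by
      exact ((hasDerivAt_id x).mul ((hgd x hx).hasDerivAt)).sub
        ((G_hasDerivAt ha hb hgc hG hxab).const_mul 2)
    rw [hder.deriv]
    have hd := deriv_div (d := fun y => y) (hgd x hx) differentiableAt_fun_id (ne_of_gt hx.1)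
    simp only [deriv_id'', mul_one, Pi.div_def] at hd
    have h2 := hpos x hx
    rw [hd] at h2
    have hx0 : (0:ℝ) < x := hx.1
    have hx2 : (0:ℝ) < x ^ 2 := by positivity
    have : deriv g x * x - g x < 0 := by
      by_contra h
      push_neg at h
      exact absurd (div_nonneg (by linarith) (le_of_lt hx2)) (not_le.mpr h2)
    nlinarith

lemma Phi_strictAntiOn (ha : a < 0) (hb : 0 < b)
    (hgc : ContinuousOn g (Ioo a b))
    (hgd : ∀ x ∈ Ioo (0:ℝ) b, DifferentiableAt ℝ g x)
    (hG : ∀ x, G x = ∫ s in (0:ℝ)..x, g s)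
    (hpos : ∀ x ∈ Ioo (0:ℝ) b, deriv (fun y => g y / y) x < 0)
    {t : ℝ} (ht : t ∈ Ico (0:ℝ) 1) :
    StrictAntiOn (fun ρ => (G ρ - G (ρ * t)) / ρ ^ 2) (Ioo 0 b) := by
  have hψ := psi_strictAntiOn ha hb hgc hgd hG hpos
  have hderiv : ∀ ρ ∈ Ioo (0:ℝ) b,
      HasDerivAt (fun ρ => (G ρ - G (ρ * t)) / ρ ^ 2)
        (((g ρ - g (ρ * t) * t) * ρ ^ 2 - (G ρ - G (ρ * t)) * (2 * ρ ^ 1)) / (ρ ^ 2) ^ 2) ρ := by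
    intro ρ hρ
    have hρab : ρ ∈ Ioo a b := ⟨lt_trans ha hρ.1, hρ.2⟩
    have hρt : ρ * t ∈ Ioo a b := by
      constructor
      · exact lt_of_lt_of_le ha (mul_nonneg (le_of_lt hρ.1) ht.1)
      · calc ρ * t ≤ ρ * 1 := by
              exact mul_le_mul_of_nonneg_left (le_of_lt ht.2) (le_of_lt hρ.1)
          _ = ρ := mul_one ρ
          _ < b := hρ.2
    have h1 : HasDerivAt (fun ρ => G (ρ * t)) (g (ρ * t) * t) ρ := by
      have := (G_hasDerivAt ha hb hgc hG hρt).comp ρ ((hasDerivAt_id ρ).mul_const t)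
      simpa [Function.comp_def] using this
    have hρ0 : (0:ℝ) < ρ := hρ.1
    exact ((G_hasDerivAt ha hb hgc hG hρab).sub h1).div (hasDerivAt_pow 2 ρ)
      (by positivity)
  apply strictAntiOn_of_deriv_neg (convex_Ioo 0 b)
  · exact fun ρ hρ => ((hderiv ρ hρ).continuousAt).continuousWithinAt
  · intro ρ hρ
    rw [interior_Ioo] at hρ
    rw [(hderiv ρ hρ).deriv]
    have hρ0 : (0:ℝ) < ρ := hρ.1
    apply div_neg_of_neg_of_pos _ (by positivity)
    have hρt0 : ρ * t ∈ Ico (0:ℝ) b := by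
      constructor
      · exact mul_nonneg (le_of_lt hρ.1) ht.1
      · nlinarith [hρ.1, hρ.2, ht.2, ht.1]
    have hlt : ρ * t < ρ := by nlinarith [hρ.1, ht.2]
    have h := hψ hρt0 ⟨le_of_lt hρ.1, hρ.2⟩ hlt
    have h' : ρ * g ρ - 2 * G ρ < (ρ * t) * g (ρ * t) - 2 * G (ρ * t) := h
    simp only [pow_one]
    nlinarith [mul_pos hρ0 (sub_pos.mpr h')]

lemma pointwise_lt (ha : a < 0) (hb : 0 < b)
    (hgc : ContinuousOn g (Ioo a b))
    (hgd : ∀ x ∈ Ioo (0:ℝ) b, DifferentiableAt ℝ g x)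
    (hG : ∀ x, G x = ∫ s in (0:ℝ)..x, g s)
    (hgpos : ∀ x ∈ Ioo (0:ℝ) b, 0 < g x)
    (hpos : ∀ x ∈ Ioo (0:ℝ) b, deriv (fun y => g y / y) x < 0)
    {r r' t : ℝ} (hr : r ∈ Ioo (0:ℝ) b) (hr' : r' ∈ Ioo (0:ℝ) b) (hrr : r < r')
    (ht : t ∈ Ico (0:ℝ) 1) :
    r * (1 / Real.sqrt (G r - G (r * t))) < r' * (1 / Real.sqrt (G r' - G (r' * t))) := by
  have hGmono := G_strictMonoOn ha hb hgc hG hgpos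
  have hDpos : ∀ ρ ∈ Ioo (0:ℝ) b, 0 < G ρ - G (ρ * t) := by
    intro ρ hρ
    have hρt : ρ * t ∈ Ico (0:ℝ) b := by
      constructor
      · exact mul_nonneg hρ.1.le ht.1
      · nlinarith [hρ.1, hρ.2, ht.1, ht.2]
    have hlt : ρ * t < ρ := by nlinarith [hρ.1, ht.2]
    have := hGmono hρt ⟨hρ.1.le, hρ.2⟩ hlt
    linarith
  have hD := hDpos r hr
  have hD' := hDpos r' hr'
  have hΦ := Phi_strictAntiOn ha hb hgc hgd hG hpos ht hr hr' hrr
  simp only at hΦ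
  -- hΦ : (G r' - G (r' * t)) / r'^2 < (G r - G (r * t)) / r^2
  have hr0 : 0 < r := hr.1
  have hr'0 : 0 < r' := hr'.1
  have hmul : (G r' - G (r' * t)) * r ^ 2 < (G r - G (r * t)) * r' ^ 2 :=
    (div_lt_div_iff₀ (by positivity) (by positivity)).mp hΦ
  have hsq : Real.sqrt ((G r' - G (r' * t)) * r ^ 2)
      < Real.sqrt ((G r - G (r * t)) * r' ^ 2) :=
    Real.sqrt_lt_sqrt (by positivity) hmul
  rw [Real.sqrt_mul hD'.le, Real.sqrt_mul hD.le, Real.sqrt_sq hr0.le,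
    Real.sqrt_sq hr'0.le] at hsq
  rw [mul_one_div, mul_one_div]
  rw [div_lt_div_iff₀ (Real.sqrt_pos.mpr hD) (Real.sqrt_pos.mpr hD')]
  linarith [hsq]

lemma pos_side_lt (ha : a < 0) (hb : 0 < b)
    (hgc : ContinuousOn g (Ioo a b))
    (hgd : ∀ x ∈ Ioo (0:ℝ) b, DifferentiableAt ℝ g x)
    (hG : ∀ x, G x = ∫ s in (0:ℝ)..x, g s)
    (hgpos : ∀ x ∈ Ioo (0:ℝ) b, 0 < g x)
    (hpos : ∀ x ∈ Ioo (0:ℝ) b, deriv (fun y => g y / y) x < 0)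
    {r r' : ℝ} (hr : r ∈ Ioo (0:ℝ) b) (hr' : r' ∈ Ioo (0:ℝ) b) (hrr : r < r') :
    (∫ x in (0:ℝ)..r, 1 / Real.sqrt (G r - G x))
      < ∫ x in (0:ℝ)..r', 1 / Real.sqrt (G r' - G x) := by
  have hr0 : 0 < r := hr.1
  have hr'0 : 0 < r' := hr'.1
  have hInt := integrable_pos ha hb hgc hG hgpos hr
  have hInt' := integrable_pos ha hb hgc hG hgpos hr'
  -- substitution x = r * t
  have hsub : ∀ {ρ : ℝ}, 0 < ρ →
      IntervalIntegrable (fun x => 1 / Real.sqrt (G ρ - G x)) volume 0 ρ →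
      (∫ x in (0:ℝ)..ρ, 1 / Real.sqrt (G ρ - G x))
        = ∫ t in (0:ℝ)..1, ρ * (1 / Real.sqrt (G ρ - G (ρ * t))) ∧
      IntervalIntegrable (fun t => ρ * (1 / Real.sqrt (G ρ - G (ρ * t)))) volume 0 1 := by
    intro ρ hρ0 hI
    have hI2 := (hI.comp_mul_left (c := ρ))
    rw [zero_div, div_self hρ0.ne'] at hI2
    constructor
    · rw [intervalIntegral.integral_const_mul]
      rw [intervalIntegral.integral_comp_mul_left (fun x => 1 / Real.sqrt (G ρ - G x)) hρ0.ne']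
      rw [mul_zero, mul_one, smul_eq_mul, ← mul_assoc, mul_inv_cancel₀ hρ0.ne', one_mul]
    · exact hI2.const_mul ρ
  obtain ⟨heq, hI1⟩ := hsub hr0 hInt
  obtain ⟨heq', hI1'⟩ := hsub hr'0 hInt'
  rw [heq, heq']
  have hdiffpos : 0 < ∫ t in (0:ℝ)..1,
      (r' * (1 / Real.sqrt (G r' - G (r' * t))) - r * (1 / Real.sqrt (G r - G (r * t)))) := by
    apply intervalIntegral.intervalIntegral_pos_of_pos_on (hI1'.sub hI1)
    · intro t htmem
      have := pointwise_lt ha hb hgc hgd hG hgpos hpos hr hr' hrr ⟨htmem.1.le, htmem.2⟩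
      linarith
    · norm_num
  rw [intervalIntegral.integral_sub hI1' hI1] at hdiffpos
  linarith

end


/-- For the conservative equation `x'' + g(x) = 0`, if `d/dx (g(x)/x) > 0` on `(a,0)` and
`d/dx (g(x)/x) < 0` on `(0,b)`, then the period function
`T(r) = √2 ∫ₛʳ dx/√(G(r) − G(x))` (with `s ∈ (a,0)` determined by `G(s) = G(r)`)
is strictly increasing. -/
theorem period_strictMono_of_deriv_div_sign
    (a b : ℝ) (g : ℝ → ℝ) (ha : a < 0) (hb : 0 < b)
    (hg : ContDiffOn ℝ 1 g (Ioo a b)) (hg0 : g 0 = 0) (hg'0 : 0 < deriv g 0)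
    (hxg : ∀ x ∈ Ioo a b, x ≠ 0 → 0 < x * g x)
    (G : ℝ → ℝ) (hG : ∀ x, G x = ∫ s in (0:ℝ)..x, g s)
    (hneg : ∀ x ∈ Ioo a (0:ℝ), 0 < deriv (fun y => g y / y) x)
    (hpos : ∀ x ∈ Ioo (0:ℝ) b, deriv (fun y => g y / y) x < 0) :
    ∀ r ∈ Ioo (0:ℝ) b, ∀ r' ∈ Ioo (0:ℝ) b, r < r' →
      ∀ s ∈ Ioo a (0:ℝ), ∀ s' ∈ Ioo a (0:ℝ), G s = G r → G s' = G r' →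
      Real.sqrt 2 * (∫ x in s..r, 1 / Real.sqrt (G r - G x)) <
        Real.sqrt 2 * (∫ x in s'..r', 1 / Real.sqrt (G r' - G x)) := by
  intro r hr r' hr' hrr s hs s' hs' hGs hGs'
  have hgc : ContinuousOn g (Ioo a b) := hg.continuousOn
  have hgdall : ∀ x ∈ Ioo a b, DifferentiableAt ℝ g x := fun x hx =>
    (hg.differentiableOn one_ne_zero).differentiableAt (isOpen_Ioo.mem_nhds hx)
  have hgd : ∀ x ∈ Ioo (0:ℝ) b, DifferentiableAt ℝ g x := fun x hx =>
    hgdall x ⟨lt_trans ha hx.1, hx.2⟩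
  have hgpos : ∀ x ∈ Ioo (0:ℝ) b, 0 < g x := by
    intro x hx
    have h := hxg x ⟨lt_trans ha hx.1, hx.2⟩ (ne_of_gt hx.1)
    rcases mul_pos_iff.mp h with ⟨_, h2⟩ | ⟨h1, _⟩
    · exact h2
    · linarith [hx.1]
  have hgneg : ∀ x ∈ Ioo a (0:ℝ), g x < 0 := by
    intro x hx
    have h := hxg x ⟨hx.1, lt_trans hx.2 hb⟩ (ne_of_lt hx.2)
    rcases mul_pos_iff.mp h with ⟨h1, _⟩ | ⟨_, h2⟩
    · linarith [hx.2]
    · exact h2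
  -- reflected data
  set gR : ℝ → ℝ := fun x => -g (-x) with hgR
  set GR : ℝ → ℝ := fun x => G (-x) with hGRdef
  have haR : -b < 0 := by linarith
  have hbR : 0 < -a := by linarith
  have hmapR : ∀ {x : ℝ}, x ∈ Ioo (-b) (-a) → -x ∈ Ioo a b := fun {x} hx =>
    ⟨by linarith [hx.2], by linarith [hx.1]⟩
  have hgcR : ContinuousOn gR (Ioo (-b) (-a)) :=
    ((hgc.comp continuous_neg.continuousOn (fun x hx => hmapR hx)).neg)
  have hGR : ∀ x, GR x = ∫ s in (0:ℝ)..x, gR s := by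
    intro x
    show G (-x) = ∫ s in (0:ℝ)..x, -g (-s)
    rw [intervalIntegral.integral_neg, intervalIntegral.integral_comp_neg g,
      hG (-x), neg_zero, intervalIntegral.integral_symm]
  have hgdR : ∀ x ∈ Ioo (0:ℝ) (-a), DifferentiableAt ℝ gR x := by
    intro x hx
    have : -x ∈ Ioo a b := ⟨by linarith [hx.2], by linarith [hx.1]; ⟩
    exact ((hgdall (-x) this).comp x (differentiableAt_id.neg)).neg
  have hgposR : ∀ x ∈ Ioo (0:ℝ) (-a), 0 < gR x := by
    intro x hx
    have : -x ∈ Ioo a (0:ℝ) := ⟨by linarith [hx.2], by linarith [hx.1]⟩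
    have := hgneg (-x) this
    simp only [hgR]
    linarith
  have hposR : ∀ x ∈ Ioo (0:ℝ) (-a), deriv (fun y => gR y / y) x < 0 := by
    intro x hx
    have hmem : -x ∈ Ioo a (0:ℝ) := ⟨by linarith [hx.2], by linarith [hx.1]⟩
    have hfun : (fun y => gR y / y) = fun y => (fun z => g z / z) (-y) := by
      funext y
      show -g (-y) / y = g (-y) / (-y)
      rw [div_neg, neg_div]
    rw [hfun]
    have hd := deriv_comp_neg (fun z => g z / z) x
    rw [hd]
    linarith [hneg (-x) hmem]
  -- s' < s
  have hGanti : StrictAntiOn G (Ioc a 0) := by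
    apply strictAntiOn_of_deriv_neg (convex_Ioc a 0)
    · exact (G_contOn ha hb hgc hG).mono (fun x hx => ⟨hx.1, lt_of_le_of_lt hx.2 hb⟩)
    · intro x hx
      rw [interior_Ioc] at hx
      rw [(G_hasDerivAt ha hb hgc hG ⟨hx.1, lt_trans hx.2 hb⟩).deriv]
      exact hgneg x hx
  have hGmono := G_strictMonoOn ha hb hgc hG hgpos
  have hGrr' : G r < G r' := hGmono ⟨hr.1.le, hr.2⟩ ⟨hr'.1.le, hr'.2⟩ hrr
  have hss' : s' < s := by
    by_contra hcon
    push_neg at hcon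
    rcases eq_or_lt_of_le hcon with heq | hlt
    · rw [heq] at hGs; rw [hGs] at hGs'; linarith
    · have := hGanti ⟨hs.1, hs.2.le⟩ ⟨hs'.1, hs'.2.le⟩ hlt
      rw [hGs, hGs'] at this; linarith
  have hsR : -s ∈ Ioo (0:ℝ) (-a) := ⟨by linarith [hs.2], by linarith [hs.1]⟩
  have hsR' : -s' ∈ Ioo (0:ℝ) (-a) := ⟨by linarith [hs'.2], by linarith [hs'.1]⟩
  have hssR : -s < -s' := by linarith
  -- positive side
  have hposlt := pos_side_lt ha hb hgc hgd hG hgpos hpos hr hr' hrr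
  have hIr := integrable_pos ha hb hgc hG hgpos hr
  have hIr' := integrable_pos ha hb hgc hG hgpos hr'
  -- negative side via reflection
  have hneglt := pos_side_lt haR hbR hgcR hgdR hGR hgposR hposR hsR hsR' hssR
  have hIs := integrable_pos haR hbR hgcR hGR hgposR hsR
  have hIs' := integrable_pos haR hbR hgcR hGR hgposR hsR'
  -- transfer the negative side
  have hGRs : GR (-s) = G r := by
    show G (-(-s)) = G r; rw [neg_neg, hGs]
  have hGRs' : GR (-s') = G r' := by
    show G (-(-s')) = G r'; rw [neg_neg, hGs']
  have hfunS : ∀ (c : ℝ), (fun x => 1 / Real.sqrt (GR c - GR (-x)))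
      = fun x => 1 / Real.sqrt (GR c - G x) := by
    intro c; funext x; show 1 / Real.sqrt (GR c - G (-(-x))) = _; rw [neg_neg]
  have htransfer : ∀ {σ : ℝ}, σ ∈ Ioo a (0:ℝ) →
      IntervalIntegrable (fun x => 1 / Real.sqrt (GR (-σ) - GR x)) volume 0 (-σ) →
      IntervalIntegrable (fun x => 1 / Real.sqrt (GR (-σ) - G x)) volume σ 0 ∧
      (∫ x in σ..(0:ℝ), 1 / Real.sqrt (GR (-σ) - G x))
        = ∫ u in (0:ℝ)..(-σ), 1 / Real.sqrt (GR (-σ) - GR u) := by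
    intro σ hσ hI
    constructor
    · have h1 := (IntervalIntegrable.iff_comp_neg (f := fun x => 1 / Real.sqrt (GR (-σ) - GR x))).mp hI
      rw [neg_zero, neg_neg] at h1
      rw [hfunS (-σ)] at h1
      exact h1.symm
    · have h2 := intervalIntegral.integral_comp_neg (a := σ) (b := 0)
        (fun x => 1 / Real.sqrt (GR (-σ) - GR x))
      rw [neg_zero] at h2
      rw [← h2]
      rw [hfunS (-σ)]
  obtain ⟨hIntS, hEqS⟩ := htransfer hs (by rwa [hGRs] at hIs ⊢)
  obtain ⟨hIntS', hEqS'⟩ := htransfer hs' (by rwa [hGRs'] at hIs' ⊢)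
  rw [hGRs] at hIntS hEqS
  rw [hGRs'] at hIntS' hEqS'
  -- split the integrals
  have hsplit : (∫ x in s..r, 1 / Real.sqrt (G r - G x))
      = (∫ x in s..(0:ℝ), 1 / Real.sqrt (G r - G x))
        + ∫ x in (0:ℝ)..r, 1 / Real.sqrt (G r - G x) :=
    (intervalIntegral.integral_add_adjacent_intervals hIntS hIr).symm
  have hsplit' : (∫ x in s'..r', 1 / Real.sqrt (G r' - G x))
      = (∫ x in s'..(0:ℝ), 1 / Real.sqrt (G r' - G x))
        + ∫ x in (0:ℝ)..r', 1 / Real.sqrt (G r' - G x) :=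
    (intervalIntegral.integral_add_adjacent_intervals hIntS' hIr').symm
  have hneglt2 : (∫ x in s..(0:ℝ), 1 / Real.sqrt (G r - G x))
      < ∫ x in s'..(0:ℝ), 1 / Real.sqrt (G r' - G x) := by
    rw [hEqS, hEqS']
    rw [← hGRs, ← hGRs']
    exact hneglt
  rw [hsplit, hsplit']
  have h2pos : (0:ℝ) < Real.sqrt 2 := Real.sqrt_pos.mpr (by norm_num)
  apply mul_lt_mul_of_pos_left _ h2pos
  linarith
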